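/- Let E be a finite ground set, θ ∈ ℝ^d, β ∈ ℝ^m, R_1, …, R_d modular functions on subsets of E, and h_1, …, h_m distance metrics on E with associated dispersion functions V_1, …, V_m. Assume that Σ_{i=1}^d θ_i R_i({a}) ≥ 0 for every a ∈ E and that β is componentwise nonnegative. Let A^greedy be the set produced by the greedy algorithm that starts from A = ∅ and, for K steps, adds an element a ∈ E \ A maximizing the marginal gain η^T Δ(a|A) = Σ_{i=1}^d θ_i R_i({a}) + Σ_{i=1}^m β_i Σ_{j∈A} h_i(a,j). Then F(A^greedy|η) ≥ (1/4) · max_{A ⊆ E, |A| ≤ K} F(A|η). -/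

import Mathlib

namespace GreedyQuarter

noncomputable def PP (t u : ℕ) : ℝ :=
  if t = 0 then 0
  else if t ≤ u + 1 then 1 / (t : ℝ)
  else (((t:ℝ)-1)*((t:ℝ)-2) - (u:ℝ)*((u:ℝ)-1)) / (2*(t:ℝ)*((t:ℝ)-1)) + 1/(t:ℝ)

lemma PP_nonneg (t u : ℕ) : 0 ≤ PP t u := by
  unfold PP
  split_ifs with h0 h1
  · exact le_refl 0
  · positivity
  · have ht2 : 2 ≤ t := by omega
    have hut : u + 2 ≤ t := by omega
    have htR : (2:ℝ) ≤ (t:ℝ) := by exact_mod_cast ht2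
    have huR : (u:ℝ) + 2 ≤ (t:ℝ) := by exact_mod_cast hut
    have hu0 : (0:ℝ) ≤ (u:ℝ) := Nat.cast_nonneg u
    have hnum : (0:ℝ) ≤ ((t:ℝ)-1)*((t:ℝ)-2) - (u:ℝ)*((u:ℝ)-1) := by nlinarith
    have hden : (0:ℝ) < 2*(t:ℝ)*((t:ℝ)-1) := by nlinarith
    positivity

lemma PP_sat {t u : ℕ} (h1 : t ≤ u + 1) : PP t u ≤ 1 / (t : ℝ) := by
  unfold PP
  split_ifs with h0
  · positivity
  · exact le_refl _

lemma PP_unsat {t u : ℕ} (h : u + 2 ≤ t) :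
    PP t u = (((t:ℝ)-1)*((t:ℝ)-2) - (u:ℝ)*((u:ℝ)-1)) / (2*(t:ℝ)*((t:ℝ)-1)) + 1/(t:ℝ) := by
  unfold PP
  split_ifs with h0 h1
  · omega
  · omega
  · rfl

lemma PP_satval {t u : ℕ} (h0 : t ≠ 0) (h1 : t ≤ u + 1) : PP t u = 1 / (t : ℝ) := by
  unfold PP
  split_ifs with h2
  · exact absurd h2 h0
  · rfl

lemma PP_R {t u : ℕ} (h : u + 2 ≤ t) :
    PP t u ≤ (u:ℝ)/((t:ℝ)*((t:ℝ)-1)) + PP t (u+1) := by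
  have ht2 : (2:ℝ) ≤ (t:ℝ) := by exact_mod_cast (by omega : 2 ≤ t)
  have huR : (u:ℝ) + 2 ≤ (t:ℝ) := by exact_mod_cast h
  have hu0 : (0:ℝ) ≤ (u:ℝ) := Nat.cast_nonneg u
  have htpos : (0:ℝ) < (t:ℝ) := by linarith
  have ht1pos : (0:ℝ) < (t:ℝ) - 1 := by linarith
  rcases eq_or_lt_of_le h with heq | hlt
  · -- u + 2 = t, next state saturated
    rw [PP_unsat h, PP_satval (by omega) (by omega)]
    have hteq : (t:ℝ) = (u:ℝ) + 2 := by exact_mod_cast heq.symm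
    have e1 : ((t:ℝ)-1)*((t:ℝ)-2) - (u:ℝ)*((u:ℝ)-1) = 2*(u:ℝ) := by rw [hteq]; ring
    rw [e1]
    have e2 : 2*(u:ℝ)/(2*(t:ℝ)*((t:ℝ)-1)) = (u:ℝ)/((t:ℝ)*((t:ℝ)-1)) := by
      rw [div_eq_div_iff (by positivity) (by positivity)]; ring
    rw [e2]
  · -- both unsaturated
    have h' : (u+1) + 2 ≤ t := by omega
    rw [PP_unsat h, PP_unsat h']
    apply le_of_eq
    push_cast
    field_simp
    ring

lemma PP_D {t u : ℕ} (h : u + 1 ≤ t) :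
    PP (t+1) u ≤ (u:ℝ)/(((t:ℝ)+1)*(t:ℝ)) + PP t u := by
  have ht1 : (1:ℝ) ≤ (t:ℝ) := by exact_mod_cast (by omega : 1 ≤ t)
  have hu0 : (0:ℝ) ≤ (u:ℝ) := Nat.cast_nonneg u
  have huR : (u:ℝ) + 1 ≤ (t:ℝ) := by exact_mod_cast h
  have h1 : u + 2 ≤ t + 1 := by omega
  have e0 : PP (t+1) u
      = (((t:ℝ)+1-1)*((t:ℝ)+1-2) - (u:ℝ)*((u:ℝ)-1)) / (2*((t:ℝ)+1)*((t:ℝ)+1-1)) + 1/((t:ℝ)+1) := by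
    rw [PP_unsat h1]; push_cast; ring_nf
  rcases eq_or_lt_of_le h with heq | hlt
  · -- u + 1 = t : next state saturated
    rw [e0, PP_satval (by omega) (by omega)]
    have hteq : (t:ℝ) = (u:ℝ) + 1 := by exact_mod_cast heq.symm
    have e1 : ((t:ℝ)+1-1)*((t:ℝ)+1-2) - (u:ℝ)*((u:ℝ)-1) = 2*(u:ℝ) := by rw [hteq]; ring
    rw [e1]
    have e2 : 2*(u:ℝ)/(2*((t:ℝ)+1)*((t:ℝ)+1-1)) = (u:ℝ)/(((t:ℝ)+1)*(t:ℝ)) := by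
      rw [div_eq_div_iff (ne_of_gt (by nlinarith : (0:ℝ) < 2*((t:ℝ)+1)*((t:ℝ)+1-1))) (ne_of_gt (by positivity : (0:ℝ) < ((t:ℝ)+1)*(t:ℝ)))]; ring
    rw [e2]
    have e3 : 1/((t:ℝ)+1) ≤ 1/(t:ℝ) := by
      rw [div_le_div_iff₀ (by positivity) (by positivity)]; linarith
    linarith
  · -- both unsaturated
    have h2 : u + 2 ≤ t := by omega
    rw [e0, PP_unsat h2]
    rw [← sub_nonneg]
    have key : ((u:ℝ)/(((t:ℝ)+1)*(t:ℝ)) + ((((t:ℝ)-1)*((t:ℝ)-2) - (u:ℝ)*((u:ℝ)-1)) / (2*(t:ℝ)*((t:ℝ)-1)) + 1/(t:ℝ)))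
        - ((((t:ℝ)+1-1)*((t:ℝ)+1-2) - (u:ℝ)*((u:ℝ)-1)) / (2*((t:ℝ)+1)*((t:ℝ)+1-1)) + 1/((t:ℝ)+1))
        = (2*(u:ℝ)*((t:ℝ)-(u:ℝ))) / (2*(t:ℝ)*((t:ℝ)+1)*((t:ℝ)-1)) := by
      have htpos : (0:ℝ) < (t:ℝ) := by linarith
      have h1pos : (0:ℝ) < (t:ℝ) - 1 := by
        have : (2:ℝ) ≤ (t:ℝ) := by exact_mod_cast (by omega : 2 ≤ t)
        linarith
      have h2pos : (0:ℝ) < (t:ℝ) + 1 := by linarith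
      rw [show (t:ℝ) + 1 - 1 = t by ring]
      field_simp
      ring
    rw [key]
    have h1pos : (0:ℝ) < (t:ℝ) - 1 := by
      have : (2:ℝ) ≤ (t:ℝ) := by exact_mod_cast (by omega : 2 ≤ t)
      linarith
    have : (0:ℝ) ≤ (t:ℝ) - (u:ℝ) := by linarith
    positivity

lemma PP_half {n : ℕ} (h : 1 ≤ n) : (1/2 : ℝ) ≤ PP n 0 := by
  rcases eq_or_lt_of_le h with heq | hlt
  · rw [PP_satval (by omega) (by omega), ← heq]
    norm_num
  · have h2 : 0 + 2 ≤ n := by omega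
    rw [PP_unsat h2]
    have hn2 : (2:ℝ) ≤ (n:ℝ) := by exact_mod_cast (by omega : 2 ≤ n)
    have hp1 : (0:ℝ) < (n:ℝ) := by linarith
    have hp2 : (0:ℝ) < (n:ℝ)-1 := by linarith
    have e : (((n:ℝ)-1)*((n:ℝ)-2) - ((0:ℕ):ℝ)*(((0:ℕ):ℝ)-1)) / (2*(n:ℝ)*((n:ℝ)-1)) + 1/(n:ℝ) = 1/2 := by
      push_cast
      field_simp
      ring
    rw [e]

noncomputable def rho (t u : ℕ) : ℝ :=
  if t ≤ u + 1 then 1/(t:ℝ) else (u:ℝ)/((t:ℝ)*((t:ℝ)-1))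

lemma rho_sat {t u : ℕ} (h : t ≤ u + 1) : rho t u = 1/(t:ℝ) := if_pos h

lemma rho_unsat {t u : ℕ} (h : ¬ t ≤ u + 1) : rho t u = (u:ℝ)/((t:ℝ)*((t:ℝ)-1)) := if_neg h

lemma rho_nonneg (t u : ℕ) : 0 ≤ rho t u := by
  unfold rho
  split_ifs with h1
  · positivity
  · have h2 : (2:ℝ) ≤ (t:ℝ) := by exact_mod_cast (by omega : 2 ≤ t)
    have : (0:ℝ) < (t:ℝ)*((t:ℝ)-1) := by nlinarith
    positivity

variable {ι : Type*} [DecidableEq ι]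

def QQ (Dd : ι → ι → ℝ) (S T : Finset ι) : ℝ := ∑ a ∈ S, ∑ b ∈ T, Dd a b

noncomputable def FF (L : ι → ℝ) (Dd : ι → ι → ℝ) (S : Finset ι) : ℝ :=
  (∑ a ∈ S, L a) + QQ Dd S S / 2

lemma QQ_nonneg {Dd : ι → ι → ℝ} (hDnn : ∀ a b, 0 ≤ Dd a b) (S T : Finset ι) :
    0 ≤ QQ Dd S T :=
  Finset.sum_nonneg fun a _ => Finset.sum_nonneg fun b _ => hDnn a b

lemma QQ_comm {Dd : ι → ι → ℝ} (hDsymm : ∀ a b, Dd a b = Dd b a) (S T : Finset ι) :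
    QQ Dd S T = QQ Dd T S := by
  unfold QQ
  rw [Finset.sum_comm]
  exact Finset.sum_congr rfl fun a _ => Finset.sum_congr rfl fun b _ => hDsymm b a

lemma QQ_splitR (Dd : ι → ι → ℝ) (S A B : Finset ι) :
    QQ Dd S (A ∩ B) + QQ Dd S (A \ B) = QQ Dd S A := by
  unfold QQ
  rw [← Finset.sum_add_distrib]
  exact Finset.sum_congr rfl fun a _ => Finset.sum_inter_add_sum_sdiff A B _

lemma QQ_splitL (Dd : ι → ι → ℝ) (S A B : Finset ι) :
    QQ Dd (A ∩ B) S + QQ Dd (A \ B) S = QQ Dd A S :=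
  Finset.sum_inter_add_sum_sdiff A B _

lemma QQ_mono {Dd : ι → ι → ℝ} (hDnn : ∀ a b, 0 ≤ Dd a b) {S S' T T' : Finset ι}
    (hS : S ⊆ S') (hT : T ⊆ T') : QQ Dd S T ≤ QQ Dd S' T' := by
  unfold QQ
  calc ∑ a ∈ S, ∑ b ∈ T, Dd a b
      ≤ ∑ a ∈ S, ∑ b ∈ T', Dd a b := by
        exact Finset.sum_le_sum fun a _ =>
          Finset.sum_le_sum_of_subset_of_nonneg hT fun b _ _ => hDnn a b
    _ ≤ ∑ a ∈ S', ∑ b ∈ T', Dd a b := by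
        exact Finset.sum_le_sum_of_subset_of_nonneg hS fun a _ _ =>
          Finset.sum_nonneg fun b _ => hDnn a b

lemma triangle_bound {Dd : ι → ι → ℝ} (hDnn : ∀ a b, 0 ≤ Dd a b)
    (hDsymm : ∀ a b, Dd a b = Dd b a) (hDdiag : ∀ a, Dd a a = 0)
    (hDtri : ∀ a b c, Dd a c ≤ Dd a b + Dd b c) (T X : Finset ι) :
    (X.card : ℝ) * QQ Dd T T ≤ 2 * ((T.card : ℝ) - 1) * QQ Dd T X := by
  have hpt : ∀ b b', (X.card : ℝ) * Dd b b' ≤ (∑ j ∈ X, Dd b j) + ∑ j ∈ X, Dd b' j := by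
    intro b b'
    have h1 : (X.card : ℝ) * Dd b b' = ∑ _j ∈ X, Dd b b' := by
      rw [Finset.sum_const, nsmul_eq_mul]
    rw [h1]
    calc ∑ _j ∈ X, Dd b b' ≤ ∑ j ∈ X, (Dd b j + Dd j b') :=
          Finset.sum_le_sum fun j _ => hDtri b j b'
      _ = (∑ j ∈ X, Dd b j) + ∑ j ∈ X, Dd j b' := Finset.sum_add_distrib
      _ = (∑ j ∈ X, Dd b j) + ∑ j ∈ X, Dd b' j := by
          congr 1
          exact Finset.sum_congr rfl fun j _ => hDsymm j b'
  have hQTT : QQ Dd T T = ∑ b ∈ T, ∑ b' ∈ T.erase b, Dd b b' := by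
    unfold QQ
    refine Finset.sum_congr rfl fun b hb => ?_
    rw [← Finset.add_sum_erase T (fun b' => Dd b b') hb, hDdiag b, zero_add]
  have hQTX : QQ Dd T X = ∑ b ∈ T, ∑ j ∈ X, Dd b j := rfl
  calc (X.card : ℝ) * QQ Dd T T
      = ∑ b ∈ T, ∑ b' ∈ T.erase b, (X.card : ℝ) * Dd b b' := by
        rw [hQTT, Finset.mul_sum]
        exact Finset.sum_congr rfl fun b _ => Finset.mul_sum _ _ _
    _ ≤ ∑ b ∈ T, ∑ b' ∈ T.erase b, ((∑ j ∈ X, Dd b j) + ∑ j ∈ X, Dd b' j) :=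
        Finset.sum_le_sum fun b _ => Finset.sum_le_sum fun b' _ => hpt b b'
    _ = ∑ b ∈ T, (((T.card : ℝ) - 1) * (∑ j ∈ X, Dd b j) + (QQ Dd T X - ∑ j ∈ X, Dd b j)) := by
        refine Finset.sum_congr rfl fun b hb => ?_
        rw [Finset.sum_add_distrib, Finset.sum_const, nsmul_eq_mul,
          Finset.card_erase_of_mem hb, Finset.sum_erase_eq_sub hb]
        have h1 : 1 ≤ T.card := Finset.card_pos.mpr ⟨b, hb⟩
        have h2 : ((T.card - 1 : ℕ) : ℝ) = (T.card : ℝ) - 1 := by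
          push_cast [h1]; ring
        rw [h2, hQTX]
    _ = 2 * ((T.card : ℝ) - 1) * QQ Dd T X := by
        rw [Finset.sum_add_distrib, ← Finset.mul_sum, Finset.sum_sub_distrib,
          Finset.sum_const, nsmul_eq_mul, ← hQTX]
        ring

set_option maxHeartbeats 1000000 in
theorem aux_greedy (E : Finset ι) (K : ℕ) (L : ι → ℝ) (Dd : ι → ι → ℝ)
    (hL : ∀ a ∈ E, 0 ≤ L a) (hDnn : ∀ a b, 0 ≤ Dd a b)
    (hDsymm : ∀ a b, Dd a b = Dd b a) (hDdiag : ∀ a, Dd a a = 0)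
    (hDtri : ∀ a b c, Dd a c ≤ Dd a b + Dd b c)
    (g : ℕ → ι) (A : ℕ → Finset ι) (hA0 : A 0 = ∅)
    (hAstep : ∀ k < K, A (k + 1) = insert (g k) (A k))
    (hmem : ∀ k < K, g k ∈ E \ A k)
    (hgreedy : ∀ k < K, ∀ b ∈ E \ A k,
      L b + ∑ j ∈ A k, Dd b j ≤ L (g k) + ∑ j ∈ A k, Dd (g k) j)
    (B : Finset ι) (hBE : B ⊆ E) (hBK : B.card ≤ K) :
    (1 / 4 : ℝ) * FF L Dd B ≤ FF L Dd (A K) := by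
  -- basic facts
  have hgnot : ∀ k < K, g k ∉ A k := fun k hk => (Finset.mem_sdiff.mp (hmem k hk)).2
  have hgE : ∀ k < K, g k ∈ E := fun k hk => (Finset.mem_sdiff.mp (hmem k hk)).1
  have hAsub : ∀ k, k ≤ K → A k ⊆ E := by
    intro k
    induction k with
    | zero => intro _; rw [hA0]; exact Finset.empty_subset E
    | succ n ih =>
      intro hk
      rw [hAstep n (by omega)]
      exact Finset.insert_subset (hgE n (by omega)) (ih (by omega))
  set γ : ℕ → ℝ := fun k => L (g k) + ∑ j ∈ A k, Dd (g k) j with hγdef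
  have hγnn : ∀ k < K, 0 ≤ γ k := by
    intro k hk
    exact add_nonneg (hL _ (hgE k hk)) (Finset.sum_nonneg fun j _ => hDnn _ _)
  have hstep : ∀ k < K, FF L Dd (A (k + 1)) = FF L Dd (A k) + γ k := by
    intro k hk
    have hx : g k ∉ A k := hgnot k hk
    rw [hAstep k hk]
    unfold FF QQ
    rw [Finset.sum_insert hx, Finset.sum_insert hx]
    have e2 : ∀ a, ∑ b ∈ insert (g k) (A k), Dd a b = Dd a (g k) + ∑ b ∈ A k, Dd a b :=
      fun a => Finset.sum_insert hx
    rw [e2 (g k)]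
    have e3 : ∑ a ∈ A k, ∑ b ∈ insert (g k) (A k), Dd a b
        = (∑ a ∈ A k, Dd a (g k)) + ∑ a ∈ A k, ∑ b ∈ A k, Dd a b := by
      rw [← Finset.sum_add_distrib]
      exact Finset.sum_congr rfl fun a _ => e2 a
    rw [e3, hDdiag (g k)]
    have e4 : ∑ a ∈ A k, Dd a (g k) = ∑ a ∈ A k, Dd (g k) a :=
      Finset.sum_congr rfl fun a _ => hDsymm a (g k)
    rw [e4]
    simp only [hγdef]
    ring
  have hFF0 : FF L Dd (A 0) = 0 := by
    rw [hA0]; unfold FF QQ; simp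
  have hmono : ∀ j k, j ≤ k → k ≤ K → FF L Dd (A j) ≤ FF L Dd (A k) := by
    intro j k hjk hkK
    induction k, hjk using Nat.le_induction with
    | base => exact le_refl _
    | succ n hn ih =>
      have h1 : n < K := by omega
      calc FF L Dd (A j) ≤ FF L Dd (A n) := ih (by omega)
        _ ≤ FF L Dd (A (n + 1)) := by rw [hstep n h1]; linarith [hγnn n h1]
  have hFFK : 0 ≤ FF L Dd (A K) := by
    have := hmono 0 K (Nat.zero_le K) le_rfl
    rw [hFF0] at this; exact this
  have hFFsum : ∀ k, k ≤ K → FF L Dd (A k) = ∑ i ∈ Finset.range k, γ i := by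
    intro k
    induction k with
    | zero => intro _; simpa using hFF0
    | succ n ih =>
      intro hk
      rw [Finset.sum_range_succ, ← ih (by omega), hstep n (by omega)]
  have hFFsub : ∀ S T : Finset ι, S ⊆ T → T ⊆ E → FF L Dd S ≤ FF L Dd T := by
    intro S T hST hTE
    unfold FF
    have h1 : ∑ a ∈ S, L a ≤ ∑ a ∈ T, L a :=
      Finset.sum_le_sum_of_subset_of_nonneg hST fun a ha _ => hL a (hTE ha)
    have h2 : QQ Dd S S ≤ QQ Dd T T := QQ_mono hDnn hST hST
    linarith
  -- trivial case : FF B ≤ 0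
  by_cases hFB : FF L Dd B ≤ 0
  · nlinarith
  push_neg at hFB
  -- case : some B \ A k empty
  by_cases hTall : ∀ k < K, (B \ A k).Nonempty
  swap
  · push_neg at hTall
    obtain ⟨k, hk, hemp⟩ := hTall
    have hBsub : B ⊆ A k := by
      rw [← Finset.sdiff_eq_empty_iff_subset]
      exact hemp
    have h1 : FF L Dd B ≤ FF L Dd (A k) := hFFsub B (A k) hBsub (hAsub k (by omega))
    have h2 : FF L Dd (A k) ≤ FF L Dd (A K) := hmono k K (by omega) le_rfl
    linarith
  -- main case
  have hK1 : 1 ≤ K := by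
    rcases Nat.eq_zero_or_pos K with h0 | h1
    · exfalso
      have : B = ∅ := Finset.card_eq_zero.mp (by omega)
      rw [this] at hFB
      have : FF L Dd (∅ : Finset ι) = 0 := by unfold FF QQ; simp
      linarith
    · exact h1
  set tt : ℕ → ℕ := fun k => (B \ A k).card with htt
  set uu : ℕ → ℕ := fun k => (A k \ B).card with huu
  have httk : ∀ k, tt k = (B \ A k).card := fun k => rfl
  have huuk : ∀ k, uu k = (A k \ B).card := fun k => rfl
  have htpos : ∀ k < K, 1 ≤ tt k := fun k hk => Finset.card_pos.mpr (hTall k hk)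
  -- key per-step inequality
  have key : ∀ k < K, rho (tt k) (uu k) * (FF L Dd B - FF L Dd (A k)) ≤ γ k := by
    intro k hk
    have hkE : A k ⊆ E := hAsub k (le_of_lt hk)
    have hIA : B ∩ A k ⊆ A k := Finset.inter_subset_right
    -- greedy bound summed over T = B \ A k
    have h7 : (∑ b ∈ B \ A k, L b) + QQ Dd (B \ A k) (A k) ≤ ((tt k : ℕ) : ℝ) * γ k := by
      have each : ∀ b ∈ B \ A k, L b + ∑ j ∈ A k, Dd b j ≤ γ k := by
        intro b hb
        have hbB : b ∈ B := (Finset.mem_sdiff.mp hb).1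
        exact hgreedy k hk b (Finset.mem_sdiff.mpr ⟨hBE hbB, (Finset.mem_sdiff.mp hb).2⟩)
      have hsum := Finset.sum_le_card_nsmul (B \ A k) (fun b => L b + ∑ j ∈ A k, Dd b j) (γ k) each
      rw [Finset.sum_add_distrib, nsmul_eq_mul] at hsum
      rw [httk k]
      exact hsum
    have h8 : QQ Dd (B \ A k) (A k ∩ B) + QQ Dd (B \ A k) (A k \ B) = QQ Dd (B \ A k) (A k) :=
      QQ_splitR Dd (B \ A k) (A k) B
    have hicomm : A k ∩ B = B ∩ A k := Finset.inter_comm _ _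
    rw [hicomm] at h8
    have r2 : ((uu k : ℕ) : ℝ) * QQ Dd (B \ A k) (B \ A k)
        ≤ 2 * (((tt k : ℕ) : ℝ) - 1) * QQ Dd (B \ A k) (A k \ B) := by
      have := triangle_bound hDnn hDsymm hDdiag hDtri (B \ A k) (A k \ B)
      rw [httk k, huuk k]
      exact this
    -- decomposition of FF B
    have hd : FF L Dd B ≤ (∑ b ∈ B \ A k, L b) + QQ Dd (B \ A k) (B ∩ A k)
        + QQ Dd (B \ A k) (B \ A k) / 2 + FF L Dd (A k) := by
      have eL : (∑ a ∈ B ∩ A k, L a) + ∑ a ∈ B \ A k, L a = ∑ a ∈ B, L a :=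
        Finset.sum_inter_add_sum_sdiff B (A k) L
      have eQ : QQ Dd (B ∩ A k) B + QQ Dd (B \ A k) B = QQ Dd B B :=
        QQ_splitL Dd B B (A k)
      have eQ1 : QQ Dd (B ∩ A k) (B ∩ A k) + QQ Dd (B ∩ A k) (B \ A k) = QQ Dd (B ∩ A k) B :=
        QQ_splitR Dd (B ∩ A k) B (A k)
      have eQ2 : QQ Dd (B \ A k) (B ∩ A k) + QQ Dd (B \ A k) (B \ A k) = QQ Dd (B \ A k) B :=
        QQ_splitR Dd (B \ A k) B (A k)
      have eC : QQ Dd (B ∩ A k) (B \ A k) = QQ Dd (B \ A k) (B ∩ A k) :=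
        QQ_comm hDsymm _ _
      have hLI : ∑ a ∈ B ∩ A k, L a ≤ ∑ a ∈ A k, L a :=
        Finset.sum_le_sum_of_subset_of_nonneg hIA fun a ha _ => hL a (hkE ha)
      have hQI : QQ Dd (B ∩ A k) (B ∩ A k) ≤ QQ Dd (A k) (A k) :=
        QQ_mono hDnn hIA hIA
      unfold FF
      linarith
    -- nonnegativity of pieces
    have hl0 : (0:ℝ) ≤ ∑ b ∈ B \ A k, L b :=
      Finset.sum_nonneg fun b hb => hL b (hBE (Finset.mem_sdiff.mp hb).1)
    have hc0 : (0:ℝ) ≤ QQ Dd (B \ A k) (B ∩ A k) := QQ_nonneg hDnn _ _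
    have hv0 : (0:ℝ) ≤ QQ Dd (B \ A k) (B \ A k) := QQ_nonneg hDnn _ _
    have hq0 : (0:ℝ) ≤ QQ Dd (B \ A k) (A k \ B) := QQ_nonneg hDnn _ _
    have ht1 : 1 ≤ tt k := htpos k hk
    have htR : (1:ℝ) ≤ ((tt k : ℕ) : ℝ) := by exact_mod_cast ht1
    by_cases hsat : tt k ≤ uu k + 1
    · -- saturated branch : rho = 1 / t
      rw [rho_sat hsat]
      have hvq : QQ Dd (B \ A k) (B \ A k) ≤ 2 * QQ Dd (B \ A k) (A k \ B) := by
        rcases eq_or_lt_of_le ht1 with h1 | h2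
        · -- tt k = 1 : T is a singleton, so QQ T T = 0
          obtain ⟨b, hb⟩ := Finset.card_eq_one.mp ((httk k) ▸ h1.symm)
          have : QQ Dd (B \ A k) (B \ A k) = 0 := by
            rw [hb]; unfold QQ; simp [hDdiag]
          rw [this]; linarith
        · -- tt k ≥ 2, hence uu k ≥ 1
          have hu1 : 1 ≤ uu k := by omega
          have huR : (1:ℝ) ≤ ((uu k : ℕ) : ℝ) := by exact_mod_cast hu1
          have htu : ((tt k : ℕ) : ℝ) - 1 ≤ ((uu k : ℕ) : ℝ) := by
            have : tt k ≤ uu k + 1 := hsat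
            have := (Nat.cast_le (α := ℝ)).mpr this
            push_cast at this
            linarith
          nlinarith
      have hfin : FF L Dd B - FF L Dd (A k) ≤ ((tt k : ℕ) : ℝ) * γ k := by linarith
      rw [one_div, inv_mul_le_iff₀ (by linarith : (0:ℝ) < ((tt k : ℕ) : ℝ))]
      exact hfin
    · -- unsaturated branch : rho = u / (t (t-1))
      push_neg at hsat
      have hu2 : uu k + 2 ≤ tt k := hsat
      have ht2R : (2:ℝ) ≤ ((tt k : ℕ) : ℝ) := by exact_mod_cast (by omega : 2 ≤ tt k)
      have huR : ((uu k : ℕ) : ℝ) + 2 ≤ ((tt k : ℕ) : ℝ) := by exact_mod_cast hu2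
      have hu0 : (0:ℝ) ≤ ((uu k : ℕ) : ℝ) := Nat.cast_nonneg _
      have hpos : (0:ℝ) < ((tt k : ℕ) : ℝ) * (((tt k : ℕ) : ℝ) - 1) := by nlinarith
      rw [rho_unsat (by omega), div_mul_eq_mul_div, div_le_iff₀ hpos]
      have m1 : ((uu k : ℕ) : ℝ) * (FF L Dd B - FF L Dd (A k))
          ≤ ((uu k : ℕ) : ℝ) * ((∑ b ∈ B \ A k, L b) + QQ Dd (B \ A k) (B ∩ A k)
            + QQ Dd (B \ A k) (B \ A k) / 2) :=
        mul_le_mul_of_nonneg_left (by linarith) hu0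
      have m2 : (((tt k : ℕ) : ℝ) - 1) * ((∑ b ∈ B \ A k, L b) + QQ Dd (B \ A k) (B ∩ A k)
            + QQ Dd (B \ A k) (A k \ B))
          ≤ (((tt k : ℕ) : ℝ) - 1) * (((tt k : ℕ) : ℝ) * γ k) :=
        mul_le_mul_of_nonneg_left (by linarith) (by linarith)
      have m3 : (0:ℝ) ≤ ((((tt k : ℕ) : ℝ) - 1) - ((uu k : ℕ) : ℝ))
          * ((∑ b ∈ B \ A k, L b) + QQ Dd (B \ A k) (B ∩ A k)) :=
        mul_nonneg (by linarith) (by linarith)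
      nlinarith [m1, m2, m3, r2]
  -- transitions
  have hsdiff : ∀ k < K, B \ A (k + 1) = (B \ A k).erase (g k) := by
    intro k hk
    rw [hAstep k hk]
    ext a
    simp only [Finset.mem_sdiff, Finset.mem_insert, Finset.mem_erase]
    tauto
  have transB : ∀ k < K, g k ∈ B → tt (k + 1) + 1 = tt k ∧ uu (k + 1) = uu k := by
    intro k hk hgB
    constructor
    · rw [httk, httk, hsdiff k hk,
        Finset.card_erase_of_mem (Finset.mem_sdiff.mpr ⟨hgB, hgnot k hk⟩)]
      have h1 := htpos k hk
      rw [httk] at h1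
      omega
    · rw [huuk, huuk]
      congr 1
      rw [hAstep k hk]
      ext a
      simp only [Finset.mem_sdiff, Finset.mem_insert]
      constructor
      · rintro ⟨h1 | h1, h2⟩
        · exact absurd (h1 ▸ hgB) h2
        · exact ⟨h1, h2⟩
      · rintro ⟨h1, h2⟩
        exact ⟨Or.inr h1, h2⟩
  have transN : ∀ k < K, g k ∉ B → tt (k + 1) = tt k ∧ uu (k + 1) = uu k + 1 := by
    intro k hk hgB
    constructor
    · rw [httk, httk, hsdiff k hk,
        Finset.erase_eq_of_notMem (fun hc => hgB (Finset.mem_sdiff.mp hc).1)]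
    · rw [huuk, huuk]
      have e : A (k + 1) \ B = insert (g k) (A k \ B) := by
        rw [hAstep k hk]
        ext a
        simp only [Finset.mem_sdiff, Finset.mem_insert]
        constructor
        · rintro ⟨h1 | h1, h2⟩
          · exact Or.inl h1
          · exact Or.inr ⟨h1, h2⟩
        · rintro (h1 | ⟨h1, h2⟩)
          · exact ⟨Or.inl h1, h1 ▸ hgB⟩
          · exact ⟨Or.inr h1, h2⟩
      rw [e, Finset.card_insert_of_notMem (fun hc => (hgnot k hk) (Finset.mem_sdiff.mp hc).1)]
  -- payment lemma
  have PL : ∀ R j, j + (R + 1) = K → tt j ≤ uu j + (R + 1) →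
      PP (tt j) (uu j) ≤ ∑ k ∈ Finset.Ico j K, rho (tt k) (uu k) := by
    intro R
    induction R with
    | zero =>
      intro j hj hinv
      have hjK : j < K := by omega
      have htne : tt j ≠ 0 := by have := htpos j hjK; omega
      have hKj : K = j + 1 := by omega
      rw [hKj, Nat.Ico_succ_singleton, Finset.sum_singleton, PP_satval htne hinv,
        rho_sat hinv]
    | succ R ih =>
      intro j hj hinv
      have hjK : j < K := by omega
      have htne : 1 ≤ tt j := htpos j hjK
      have hsplit : ∑ k ∈ Finset.Ico j K, rho (tt k) (uu k)
          = rho (tt j) (uu j) + ∑ k ∈ Finset.Ico (j + 1) K, rho (tt k) (uu k) :=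
        Finset.sum_eq_sum_Ico_succ_bot hjK _
      by_cases hsat : tt j ≤ uu j + 1
      · have h1 : PP (tt j) (uu j) = 1 / ((tt j : ℕ) : ℝ) := PP_satval (by omega) hsat
        have h2 : (0:ℝ) ≤ ∑ k ∈ Finset.Ico (j + 1) K, rho (tt k) (uu k) :=
          Finset.sum_nonneg fun k _ => rho_nonneg _ _
        rw [hsplit, h1, rho_sat hsat]
        linarith
      · push_neg at hsat
        have hu2 : uu j + 2 ≤ tt j := hsat
        rw [hsplit, rho_unsat (by omega)]
        by_cases hgB : g j ∈ B
        · obtain ⟨ht', hu'⟩ := transB j hjK hgB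
          have hih := ih (j + 1) (by omega) (by omega)
          rw [hu'] at hih
          have hD := PP_D (t := tt (j + 1)) (u := uu j) (by omega)
          rw [ht'] at hD
          have hcast : ((tt j : ℕ) : ℝ) - 1 = ((tt (j + 1) : ℕ) : ℝ) := by
            have : tt (j+1) + 1 = tt j := ht'
            have := congrArg (fun n : ℕ => (n : ℝ)) this
            push_cast at this
            linarith
          have hden : ((tt j : ℕ) : ℝ) * (((tt j : ℕ) : ℝ) - 1)
              = (((tt (j+1) : ℕ) : ℝ) + 1) * ((tt (j+1) : ℕ) : ℝ) := by
            rw [hcast, ← hcast]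
            ring
          rw [hden]
          linarith
        · obtain ⟨ht', hu'⟩ := transN j hjK hgB
          have hih := ih (j + 1) (by omega) (by omega)
          rw [ht', hu'] at hih
          have hR := PP_R (t := tt j) (u := uu j) (by omega)
          linarith
  -- assemble
  have htt0 : tt 0 = B.card := by rw [htt]; simp [hA0]
  have huu0 : uu 0 = 0 := by rw [huu]; simp [hA0]
  have hScard : 1 ≤ B.card := by
    have := htpos 0 (by omega)
    rwa [htt0] at this
  have hPL0 := PL (K - 1) 0 (by omega) (by rw [htt0, huu0]; omega)
  rw [htt0, huu0] at hPL0
  have hhalf : (1/2 : ℝ) ≤ ∑ k ∈ Finset.Ico 0 K, rho (tt k) (uu k) :=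
    le_trans (PP_half hScard) hPL0
  set x : ℝ := FF L Dd B - FF L Dd (A K) with hx
  by_cases hxneg : x ≤ 0
  · nlinarith
  push_neg at hxneg
  have hsum : ∑ k ∈ Finset.Ico 0 K, rho (tt k) (uu k) * x ≤ ∑ k ∈ Finset.Ico 0 K, γ k := by
    apply Finset.sum_le_sum
    intro k hk
    have hkK : k < K := (Finset.mem_Ico.mp hk).2
    have h1 : x ≤ FF L Dd B - FF L Dd (A k) := by
      have := hmono k K (by omega) le_rfl
      rw [hx]; linarith
    calc rho (tt k) (uu k) * x ≤ rho (tt k) (uu k) * (FF L Dd B - FF L Dd (A k)) :=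
          mul_le_mul_of_nonneg_left h1 (rho_nonneg _ _)
      _ ≤ γ k := key k hkK
  rw [← Finset.sum_mul] at hsum
  have hIco : Finset.Ico 0 K = Finset.range K := by
    rw [Finset.range_eq_Ico]
  rw [hIco] at hsum hhalf
  rw [← hFFsum K le_rfl] at hsum
  have h5 : (1/2 : ℝ) * x ≤ (∑ k ∈ Finset.range K, rho (tt k) (uu k)) * x :=
    mul_le_mul_of_nonneg_right hhalf (le_of_lt hxneg)
  have h6 : (1/2 : ℝ) * x ≤ FF L Dd (A K) := le_trans h5 hsum
  rw [hx] at h6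
  linarith

end GreedyQuarter

/-- Greedy algorithm for maximizing a combination of modular functions and
dispersion functions achieves a 1/4 approximation ratio.

`E` is a finite ground set, `θ ∈ ℝ^d`, `β ∈ ℝ^m`, `R i` are modular functions
(`R i A = ∑ a ∈ A, R i {a}`), `h i` are distance metrics with associated dispersion
functions `V i A = (∑ a ∈ A, ∑ b ∈ A, h i a b) / 2` (the sum over unordered pairs of
distinct elements of `A`, given symmetry and vanishing diagonal).
The utility is `F A = ∑ i, θ i * R i A + ∑ i, β i * V i A`.
The greedy sequence is given by elements `g k` and partial sets `A k` with `A 0 = ∅`,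
`A (k+1) = insert (g k) (A k)`, where each `g k ∈ E \ A k` maximizes the marginal gain
`η^T Δ(a | A k) = ∑ i, θ i * R i {a} + ∑ i, β i * ∑ j ∈ A k, h i a j`.
If `∑ i, θ i * R i {a} ≥ 0` for every `a ∈ E` and `β` is componentwise nonnegative, then
`F (A K) ≥ (1/4) * F B` for every `B ⊆ E` with `|B| ≤ K`. -/
theorem greedy_modular_dispersion_quarter_approx
    {ι : Type*} [DecidableEq ι] (E : Finset ι) (d m K : ℕ)
    (θ : Fin d → ℝ) (β : Fin m → ℝ)
    (R : Fin d → Finset ι → ℝ)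
    (hR : ∀ i (A : Finset ι), R i A = ∑ a ∈ A, R i {a})
    (h : Fin m → ι → ι → ℝ)
    (hnonneg : ∀ i a b, 0 ≤ h i a b)
    (hsymm : ∀ i a b, h i a b = h i b a)
    (hdiag : ∀ i a, h i a a = 0)
    (htri : ∀ i a b c, h i a c ≤ h i a b + h i b c)
    (V : Fin m → Finset ι → ℝ)
    (hV : ∀ i (A : Finset ι), V i A = (∑ a ∈ A, ∑ b ∈ A, h i a b) / 2)
    (F : Finset ι → ℝ)
    (hF : ∀ A : Finset ι, F A = ∑ i, θ i * R i A + ∑ i, β i * V i A)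
    (hθR : ∀ a ∈ E, 0 ≤ ∑ i, θ i * R i {a})
    (hβ : ∀ i, 0 ≤ β i)
    (g : ℕ → ι) (A : ℕ → Finset ι)
    (hA0 : A 0 = ∅)
    (hAstep : ∀ k < K, A (k + 1) = insert (g k) (A k))
    (hmem : ∀ k < K, g k ∈ E \ A k)
    (hgreedy : ∀ k < K, ∀ b ∈ E \ A k,
      (∑ i, θ i * R i {b}) + ∑ i, β i * ∑ j ∈ A k, h i b j
        ≤ (∑ i, θ i * R i {g k}) + ∑ i, β i * ∑ j ∈ A k, h i (g k) j) :
    ∀ B ⊆ E, B.card ≤ K → (1 / 4 : ℝ) * F B ≤ F (A K) := by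
  set L : ι → ℝ := fun a => ∑ i, θ i * R i {a} with hLdef
  set Dd : ι → ι → ℝ := fun a b => ∑ i, β i * h i a b with hDdef
  have hLa : ∀ a, L a = ∑ i, θ i * R i {a} := fun a => rfl
  have hDab : ∀ a b, Dd a b = ∑ i, β i * h i a b := fun a b => rfl
  -- F agrees with FF
  have hFFeq : ∀ S : Finset ι, F S = GreedyQuarter.FF L Dd S := by
    intro S
    rw [hF S]
    unfold GreedyQuarter.FF GreedyQuarter.QQ
    have e1 : ∑ i, θ i * R i S = ∑ a ∈ S, L a := by
      have e0 : ∀ i : Fin d, θ i * R i S = ∑ a ∈ S, θ i * R i {a} := fun i => by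
        rw [hR i S, Finset.mul_sum]
      rw [Finset.sum_congr rfl fun i _ => e0 i, Finset.sum_comm]
    have e2 : ∑ i, β i * V i S = (∑ a ∈ S, ∑ b ∈ S, Dd a b) / 2 := by
      simp only [hV, ← mul_div_assoc]
      rw [← Finset.sum_div]
      congr 1
      simp only [Finset.mul_sum]
      rw [Finset.sum_comm]
      refine Finset.sum_congr rfl fun a _ => ?_
      rw [Finset.sum_comm]
    rw [e1, e2]
  -- Dd properties
  have hDnn : ∀ a b, 0 ≤ Dd a b := fun a b =>
    Finset.sum_nonneg fun i _ => mul_nonneg (hβ i) (hnonneg i a b)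
  have hDsymm : ∀ a b, Dd a b = Dd b a := fun a b =>
    Finset.sum_congr rfl fun i _ => by rw [hsymm i a b]
  have hDdiag : ∀ a, Dd a a = 0 := fun a => by
    rw [hDab]; simp [hdiag]
  have hDtri : ∀ a b c, Dd a c ≤ Dd a b + Dd b c := by
    intro a b c
    rw [hDab, hDab, hDab, ← Finset.sum_add_distrib]
    refine Finset.sum_le_sum fun i _ => ?_
    rw [← mul_add]
    exact mul_le_mul_of_nonneg_left (htri i a b c) (hβ i)
  -- greedy condition in L/Dd form
  have hgreedy' : ∀ k < K, ∀ b ∈ E \ A k,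
      L b + ∑ j ∈ A k, Dd b j ≤ L (g k) + ∑ j ∈ A k, Dd (g k) j := by
    intro k hk b hb
    have econv : ∀ x : ι, ∑ j ∈ A k, Dd x j = ∑ i, β i * ∑ j ∈ A k, h i x j := by
      intro x
      simp only [hDab, Finset.mul_sum]
      rw [Finset.sum_comm]
    rw [hLa, hLa, econv, econv]
    exact hgreedy k hk b hb
  intro B hBE hBK
  rw [hFFeq B, hFFeq (A K)]
  exact GreedyQuarter.aux_greedy E K L Dd hθR hDnn hDsymm hDdiag hDtri g A hA0 hAstep hmem
    hgreedy' B hBE hBK
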